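/- Let n ≥ 2 and 0 < λ ≤ Λ ≤ 3λ, let α ∈ (0,1), ε > 0, C ≥ 1, N ∈ ℕ with N ≥ 2, and let f₂ be the annular step function built from these constants. Let A(x), A(z) ∈ 𝒜(λ,Λ) and let x, z ∈ ℝⁿ satisfy (x−z)/|x−z| = e₁ and (1/2)√λ·ε < |x−z| ≤ N√λ·ε. Define ν_x := A(x)^{−1/2}e₁ and ν_z := A(z)^{−1/2}e₁, and let Q ∈ O(n) be any orthogonal matrix with Q(ν_x/|ν_x|) = −ν_z/|ν_z|. Then ⨍_𝔹 f₂(x + εA(x)^{1/2} y, z + εA(z)^{1/2} Q y) dy ≥ γ C² f₂(x,z), where γ := 3^{−n/2}·(1/300)^n ∈ (0,1) depends only on n. -/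

import Mathlib

open MeasureTheory Matrix

noncomputable section

abbrev EucSp (n : ℕ) := EuclideanSpace ℝ (Fin n)

/-- Principal square root of a positive semidefinite matrix (zero otherwise). -/
noncomputable def msqrt {n : ℕ} (A : Matrix (Fin n) (Fin n) ℝ) : Matrix (Fin n) (Fin n) ℝ :=
  open scoped Classical in
  if h : A.PosSemidef then
    (h.1.eigenvectorUnitary.1 * diagonal ((↑) ∘ (√·) ∘ h.1.eigenvalues) *
      (star h.1.eigenvectorUnitary : Matrix (Fin n) (Fin n) ℝ)) else 0

/-- `A ∈ 𝒜(λ,Λ)`: symmetric and uniformly elliptic. -/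
def UnifElliptic {n : ℕ} (lam Lam : ℝ) (A : Matrix (Fin n) (Fin n) ℝ) : Prop :=
  A.IsSymm ∧ ∀ ξ : Fin n → ℝ,
    lam * (ξ ⬝ᵥ ξ) ≤ ξ ⬝ᵥ A.mulVec ξ ∧ ξ ⬝ᵥ A.mulVec ξ ≤ Lam * (ξ ⬝ᵥ ξ)

/-- Membership in the orthogonal group `O(n)`. -/
def IsOrthMat {n : ℕ} (Q : Matrix (Fin n) (Fin n) ℝ) : Prop :=
  Q * Qᵀ = 1 ∧ Qᵀ * Q = 1

/-- Matrix acting on Euclidean space. -/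
noncomputable def mvE {n : ℕ} (M : Matrix (Fin n) (Fin n) ℝ) (y : EucSp n) : EucSp n :=
  (EuclideanSpace.equiv (Fin n) ℝ).symm (M.mulVec ((EuclideanSpace.equiv (Fin n) ℝ) y))

/-- The ellipsoid `x + ε A^{1/2} 𝔹`. -/
noncomputable def ellipsoid {n : ℕ} (ε : ℝ) (M : Matrix (Fin n) (Fin n) ℝ) (x : EucSp n) :
    Set (EucSp n) :=
  (fun y => x + ε • mvE (msqrt M) y) '' Metric.ball (0 : EucSp n) 1

/-- The matrix `J_α = diag(α-1, 1, …, 1)`. -/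
noncomputable def Jmat (n : ℕ) (α : ℝ) : Matrix (Fin n) (Fin n) ℝ :=
  Matrix.diagonal (fun i => if (i : ℕ) = 0 then α - 1 else 1)

/-- Reflection in the first coordinate axis. -/
noncomputable def J0 (n : ℕ) : Matrix (Fin n) (Fin n) ℝ :=
  Matrix.diagonal (fun i => if (i : ℕ) = 0 then -1 else 1)

/-- The first standard basis vector `e₁`. -/
noncomputable def e1 (n : ℕ) : EucSp n :=
  (EuclideanSpace.equiv (Fin n) ℝ).symm (fun i => if (i : ℕ) = 0 then 1 else 0)

/-- `f₁(x,z) = C|x-z|^α + C̃|x+z|²`. -/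
noncomputable def f1 {n : ℕ} (α C Ct : ℝ) (x z : EucSp n) : ℝ :=
  C * ‖x - z‖ ^ α + Ct * ‖x + z‖ ^ 2

/-- The annular step function `f₂`. -/
noncomputable def f2 {n : ℕ} (α C lam ε : ℝ) (N : ℕ) (x z : EucSp n) : ℝ :=
  if ‖x - z‖ / (Real.sqrt lam * ε) > (N : ℝ) then 0
  else C ^ (2 * (2 * N - ⌈2 * ‖x - z‖ / (Real.sqrt lam * ε)⌉₊)) * ε ^ α

/- ---------- auxiliary lemmas ---------- -/

theorem norm_mvE_sq {n : ℕ} (M : Matrix (Fin n) (Fin n) ℝ) (y : EucSp n) :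
    ‖mvE M y‖^2 = (M.mulVec y) ⬝ᵥ (M.mulVec y) := by
  rw [← real_inner_self_eq_norm_sq]
  simp only [PiLp.inner_apply, RCLike.inner_apply, dotProduct, mvE, conj_trivial]
  rfl

theorem quad_eq {n : ℕ} (M A : Matrix (Fin n) (Fin n) ℝ) (h : Mᵀ * M = A) (v : Fin n → ℝ) :
    (M.mulVec v) ⬝ᵥ (M.mulVec v) = v ⬝ᵥ A.mulVec v := by
  calc (M.mulVec v) ⬝ᵥ (M.mulVec v) = (v ᵥ* Mᵀ) ⬝ᵥ (M *ᵥ v) := by rw [Matrix.vecMul_transpose]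
    _ = v ⬝ᵥ Mᵀ *ᵥ (M *ᵥ v) := (Matrix.dotProduct_mulVec _ _ _).symm
    _ = v ⬝ᵥ A.mulVec v := by rw [Matrix.mulVec_mulVec, h]

theorem mvE_add {n : ℕ} (M : Matrix (Fin n) (Fin n) ℝ) (y z : EucSp n) :
    mvE M (y + z) = mvE M y + mvE M z := by
  simp only [mvE]; ext i; simp [Matrix.mulVec_add]

theorem mvE_smul {n : ℕ} (M : Matrix (Fin n) (Fin n) ℝ) (a : ℝ) (y : EucSp n) :
    mvE M (a • y) = a • mvE M y := by
  simp only [mvE]; ext i; simp [Matrix.mulVec_smul]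

theorem mvE_sub {n : ℕ} (M : Matrix (Fin n) (Fin n) ℝ) (y z : EucSp n) :
    mvE M (y - z) = mvE M y - mvE M z := by
  have h := mvE_add M (y - z) z
  rw [sub_add_cancel] at h
  rw [h]; abel

theorem mvE_mul {n : ℕ} (M N : Matrix (Fin n) (Fin n) ℝ) (y : EucSp n) :
    mvE (M * N) y = mvE M (mvE N y) := by
  simp only [mvE]; ext i; simp [← Matrix.mulVec_mulVec]; rfl

theorem mvE_one {n : ℕ} (y : EucSp n) : mvE 1 y = y := by
  simp only [mvE]; ext i; simp [Matrix.one_mulVec]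

theorem dotProduct_self_pos {n : ℕ} {v : Fin n → ℝ} (hv : v ≠ 0) : 0 < v ⬝ᵥ v := by
  have h0 : (0:ℝ) ≤ v ⬝ᵥ v := by simpa using dotProduct_self_star_nonneg v
  exact h0.lt_of_ne (Ne.symm fun e => hv (dotProduct_self_eq_zero.1 e))

theorem UnifElliptic.posDef {n : ℕ} {lam Lam : ℝ} {A : Matrix (Fin n) (Fin n) ℝ}
    (hlam : 0 < lam) (h : UnifElliptic lam Lam A) : A.PosDef := by
  refine Matrix.PosDef.of_dotProduct_mulVec_pos ?_ (fun v hv => ?_)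
  · rw [Matrix.IsHermitian, Matrix.conjTranspose_eq_transpose_of_trivial, h.1]
  · have h1 : 0 < v ⬝ᵥ v := dotProduct_self_pos hv
    have := (h.2 v).1
    simp only [star_trivial]
    nlinarith

theorem msqrt_mul_self {n : ℕ} {A : Matrix (Fin n) (Fin n) ℝ} (h : A.PosSemidef) :
    msqrt A * msqrt A = A := by
  rw [msqrt, dif_pos h]
  have hU : (star h.1.eigenvectorUnitary : Matrix (Fin n) (Fin n) ℝ) * h.1.eigenvectorUnitary.1 = 1 :=
    Unitary.coe_star_mul_self _
  have hD : diagonal ((↑) ∘ (√·) ∘ h.1.eigenvalues) * diagonal ((↑) ∘ (√·) ∘ h.1.eigenvalues)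
      = diagonal (RCLike.ofReal ∘ h.1.eigenvalues : Fin n → ℝ) := by
    rw [diagonal_mul_diagonal]; congr 1; funext i
    simp [Real.mul_self_sqrt (h.eigenvalues_nonneg i)]
  conv_rhs => rw [h.1.spectral_theorem]
  rw [Unitary.conjStarAlgAut_apply]
  calc _ = h.1.eigenvectorUnitary.1 * (diagonal ((↑) ∘ (√·) ∘ h.1.eigenvalues) *
      ((star h.1.eigenvectorUnitary : Matrix (Fin n) (Fin n) ℝ) * h.1.eigenvectorUnitary.1) *
      diagonal ((↑) ∘ (√·) ∘ h.1.eigenvalues)) * (star h.1.eigenvectorUnitary : Matrix (Fin n) (Fin n) ℝ) := by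
        simp only [Matrix.mul_assoc]
    _ = _ := by rw [hU, Matrix.mul_one, hD]

theorem msqrt_transpose {n : ℕ} {A : Matrix (Fin n) (Fin n) ℝ} (h : A.PosSemidef) :
    (msqrt A)ᵀ = msqrt A := by
  rw [msqrt, dif_pos h]
  simp only [transpose_mul, diagonal_transpose, Matrix.mul_assoc]
  simp [star_eq_conjTranspose, conjTranspose_eq_transpose_of_trivial]

theorem msqrt_sq_eq {n : ℕ} {A : Matrix (Fin n) (Fin n) ℝ} (h : A.PosSemidef) :
    (msqrt A)ᵀ * msqrt A = A := by rw [msqrt_transpose h, msqrt_mul_self h]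

theorem msqrt_det_ne_zero {n : ℕ} {A : Matrix (Fin n) (Fin n) ℝ} (h : A.PosDef) :
    (msqrt A).det ≠ 0 := by
  intro e
  have h2 : (msqrt A * msqrt A).det = A.det := by rw [msqrt_mul_self h.posSemidef]
  rw [Matrix.det_mul, e, mul_zero] at h2
  exact h.det_pos.ne h2

theorem msqrt_mul_inv {n : ℕ} {A : Matrix (Fin n) (Fin n) ℝ} (h : A.PosDef) :
    msqrt A * (msqrt A)⁻¹ = 1 :=
  Matrix.mul_nonsing_inv _ (isUnit_iff_ne_zero.2 (msqrt_det_ne_zero h))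

theorem norm_sq_dot {n : ℕ} (y : EucSp n) : ‖y‖^2 = (y : Fin n → ℝ) ⬝ᵥ (y : Fin n → ℝ) := by
  rw [← real_inner_self_eq_norm_sq]
  simp only [PiLp.inner_apply, RCLike.inner_apply, dotProduct, conj_trivial]

theorem norm_e1 {n : ℕ} (hn : 0 < n) : ‖e1 n‖ = 1 := by
  have h2 : ‖e1 n‖^2 = 1 := by
    rw [norm_sq_dot]
    have key : ∀ i : Fin n, ((e1 n : Fin n → ℝ) i) * ((e1 n : Fin n → ℝ) i)
        = if i = (⟨0, hn⟩ : Fin n) then 1 else 0 := by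
      intro i
      by_cases h : (i : ℕ) = 0
      · have : i = (⟨0, hn⟩ : Fin n) := Fin.ext h
        simp [e1, this]
      · have : i ≠ (⟨0, hn⟩ : Fin n) := fun e => h (by rw [e])
        simp [e1, h, this]
    rw [dotProduct, Finset.sum_congr rfl (fun i _ => key i)]
    simp
  nlinarith [norm_nonneg (e1 n)]

theorem le_of_sq_le_sq11 {a b : ℝ} (ha : 0 ≤ a) (hb : 0 ≤ b) (h : a^2 ≤ b^2) : a ≤ b := by
  nlinarith

theorem norm_mvE_bounds {n : ℕ} {lam Lam : ℝ} {A : Matrix (Fin n) (Fin n) ℝ}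
    (hlam : 0 < lam) (hLam : 0 ≤ Lam) (h : UnifElliptic lam Lam A) (y : EucSp n) :
    Real.sqrt lam * ‖y‖ ≤ ‖mvE (msqrt A) y‖ ∧ ‖mvE (msqrt A) y‖ ≤ Real.sqrt Lam * ‖y‖ := by
  have hps := (h.posDef hlam).posSemidef
  have hq : ‖mvE (msqrt A) y‖^2 = (y : Fin n → ℝ) ⬝ᵥ A.mulVec y := by
    rw [norm_mvE_sq, quad_eq _ _ (msqrt_sq_eq hps)]
  have hy := norm_sq_dot y
  constructor
  · have key : (Real.sqrt lam * ‖y‖)^2 ≤ ‖mvE (msqrt A) y‖^2 := by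
      rw [mul_pow, Real.sq_sqrt hlam.le, hq]
      have := (h.2 y).1
      nlinarith
    exact le_of_sq_le_sq11 (by positivity) (norm_nonneg _) key
  · have key : ‖mvE (msqrt A) y‖^2 ≤ (Real.sqrt Lam * ‖y‖)^2 := by
      rw [mul_pow, Real.sq_sqrt hLam, hq]
      have := (h.2 y).2
      nlinarith
    exact le_of_sq_le_sq11 (norm_nonneg _) (by positivity) key

theorem norm_mvE_orth {n : ℕ} {Q : Matrix (Fin n) (Fin n) ℝ} (hQ : Qᵀ * Q = 1) (y : EucSp n) :
    ‖mvE Q y‖ = ‖y‖ := by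
  have h1 : ‖mvE Q y‖^2 = ‖y‖^2 := by
    rw [norm_mvE_sq, quad_eq _ _ hQ, Matrix.one_mulVec, ← norm_sq_dot]
  have := norm_nonneg (mvE Q y); have := norm_nonneg y
  nlinarith

theorem mvE_continuous {n : ℕ} (M : Matrix (Fin n) (Fin n) ℝ) : Continuous (mvE M) := by
  let L : EucSp n →ₗ[ℝ] EucSp n :=
    { toFun := mvE M
      map_add' := mvE_add M
      map_smul' := mvE_smul M }
  exact L.continuous_of_finiteDimensional

theorem gamma_eq_rho_pow (n : ℕ) :
    (3 : ℝ) ^ (-(n : ℝ) / 2) * (1 / 300) ^ n = ((Real.sqrt 3)⁻¹ * (1 / 300)) ^ n := by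
  have h1 : (Real.sqrt 3 : ℝ) ^ n = (3 : ℝ) ^ ((n : ℝ) / 2) := by
    rw [Real.sqrt_eq_rpow, ← Real.rpow_natCast ((3:ℝ) ^ ((1:ℝ)/2)) n,
      ← Real.rpow_mul (by norm_num : (0:ℝ) ≤ 3)]
    ring_nf
  rw [mul_pow, inv_pow, h1, ← Real.rpow_neg_one ((3:ℝ) ^ ((n:ℝ)/2)),
    ← Real.rpow_mul (by norm_num : (0:ℝ) ≤ 3)]
  ring_nf

/-- the medium distance coupling estimate for the annular step
function `f₂` (Lemma 5.2). -/
theorem stmt11 {n : ℕ} (hn : 2 ≤ n)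
    (lam Lam : ℝ) (hlam : 0 < lam) (hlL : lam ≤ Lam) (h3 : Lam ≤ 3 * lam)
    (α : ℝ) (hα : α ∈ Set.Ioo (0 : ℝ) 1)
    (ε : ℝ) (hε : 0 < ε) (C : ℝ) (hC : 1 ≤ C) (N : ℕ) (hN : 2 ≤ N)
    (Ax Az : Matrix (Fin n) (Fin n) ℝ)
    (hAx : UnifElliptic lam Lam Ax) (hAz : UnifElliptic lam Lam Az)
    (x z : EucSp n) (hxz : ‖x - z‖⁻¹ • (x - z) = e1 n)
    (hlo : (1 / 2) * Real.sqrt lam * ε < ‖x - z‖)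
    (hhi : ‖x - z‖ ≤ (N : ℝ) * Real.sqrt lam * ε)
    (Q : Matrix (Fin n) (Fin n) ℝ) (hQ : IsOrthMat Q)
    (hQv : mvE Q (‖mvE (msqrt Ax)⁻¹ (e1 n)‖⁻¹ • mvE (msqrt Ax)⁻¹ (e1 n)) =
        -(‖mvE (msqrt Az)⁻¹ (e1 n)‖⁻¹ • mvE (msqrt Az)⁻¹ (e1 n))) :
    (⨍ y in Metric.ball (0 : EucSp n) 1,
        f2 α C lam ε N (x + ε • mvE (msqrt Ax) y) (z + ε • mvE (msqrt Az * Q) y)) ≥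
      ((3 : ℝ) ^ (-(n : ℝ) / 2) * (1 / 300) ^ n) * C ^ 2 * f2 α C lam ε N x z := by
  obtain ⟨hα0, hα1⟩ := hα
  have hLam0 : (0:ℝ) ≤ Lam := le_trans hlam.le hlL
  set s := Real.sqrt lam with hs_def
  have hs : 0 < s := Real.sqrt_pos.2 hlam
  have hsL : Real.sqrt Lam ≤ Real.sqrt 3 * s := by
    rw [hs_def, ← Real.sqrt_mul (by norm_num : (0:ℝ) ≤ 3)]
    exact Real.sqrt_le_sqrt h3
  have h3one : (1:ℝ) ≤ Real.sqrt 3 := by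
    rw [show (1:ℝ) = Real.sqrt 1 from (Real.sqrt_one).symm]
    exact Real.sqrt_le_sqrt (by norm_num)
  have h30 : (0:ℝ) < Real.sqrt 3 := by linarith
  set X := s * ε with hX_def
  have hX : 0 < X := mul_pos hs hε
  set d := ‖x - z‖ with hd_def
  have hd : 0 < d := lt_trans (by positivity) hlo
  have hlo' : X < 2 * d := by rw [hX_def]; linarith
  have hhi' : d ≤ (N:ℝ) * X := by rw [hX_def]; linarith [hhi]
  set i := ⌈2 * d / (s * ε)⌉₊ with hi_def
  have hile : 2 * d ≤ (i:ℝ) * X := by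
    have h := Nat.le_ceil (2 * d / (s * ε))
    rw [div_le_iff₀ hX] at h
    exact h
  have hi2 : 2 ≤ i := by
    have h1 : ((1:ℕ):ℝ) < 2 * d / (s * ε) := by
      rw [lt_div_iff₀ hX]; push_cast; linarith
    have := Nat.lt_ceil.2 h1
    omega
  have hiN : i ≤ 2 * N := by
    apply Nat.ceil_le.2
    rw [div_le_iff₀ hX]; push_cast; linarith
  have hi2R : (2:ℝ) ≤ (i:ℝ) := by exact_mod_cast hi2
  have hiNR : (i:ℝ) ≤ 2 * (N:ℝ) := by exact_mod_cast hiN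
  -- value of f2 at (x, z)
  have hεα : 0 < ε ^ α := Real.rpow_pos_of_pos hε α
  have hf2xz : f2 α C lam ε N x z = C ^ (2 * (2 * N - i)) * ε ^ α := by
    rw [f2, ← hs_def, ← hd_def, ← hi_def, if_neg]
    rw [not_lt, div_le_iff₀ hX]
    exact hhi'
  clear_value i
  clear_value X
  clear_value s
  clear_value d
  have hsε : 0 < s * ε := by rw [← hX_def]; exact hX
  -- matrices
  have hpdx : Ax.PosDef := hAx.posDef hlam
  have hpdz : Az.PosDef := hAz.posDef hlam
  set Mx := msqrt Ax with hMx_def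
  set Mz := msqrt Az with hMz_def
  have he1 : ‖e1 n‖ = 1 := norm_e1 (by omega)
  set νx := mvE Mx⁻¹ (e1 n) with hνx_def
  set νz := mvE Mz⁻¹ (e1 n) with hνz_def
  have hMxνx : mvE Mx νx = e1 n := by
    rw [hνx_def, ← mvE_mul, hMx_def, msqrt_mul_inv hpdx, mvE_one]
  have hMzνz : mvE Mz νz = e1 n := by
    rw [hνz_def, ← mvE_mul, hMz_def, msqrt_mul_inv hpdz, mvE_one]
  have hbndx : Real.sqrt Lam * ‖νx‖ ≥ 1 ∧ s * ‖νx‖ ≤ 1 := by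
    have h := norm_mvE_bounds hlam hLam0 hAx νx
    rw [hMx_def] at hMxνx
    rw [hMxνx, he1, ← hs_def] at h
    exact ⟨h.2, h.1⟩
  have hbndz : Real.sqrt Lam * ‖νz‖ ≥ 1 ∧ s * ‖νz‖ ≤ 1 := by
    have h := norm_mvE_bounds hlam hLam0 hAz νz
    rw [hMz_def] at hMzνz
    rw [hMzνz, he1, ← hs_def] at h
    exact ⟨h.2, h.1⟩
  clear_value Mx Mz νx νz
  have hνxpos : 0 < ‖νx‖ := by
    have h2 := hbndx.1
    have hne : ‖νx‖ ≠ 0 := by intro e; rw [e, mul_zero] at h2; exact absurd h2 (by norm_num)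
    exact (norm_nonneg νx).lt_of_ne (Ne.symm hne)
  have hνzpos : 0 < ‖νz‖ := by
    have h2 := hbndz.1
    have hne : ‖νz‖ ≠ 0 := by intro e; rw [e, mul_zero] at h2; exact absurd h2 (by norm_num)
    exact (norm_nonneg νz).lt_of_ne (Ne.symm hne)
  set bx := ‖νx‖⁻¹ with hbx_def
  set bz := ‖νz‖⁻¹ with hbz_def
  have hbxν : bx * ‖νx‖ = 1 := inv_mul_cancel₀ hνxpos.ne'
  have hbzν : bz * ‖νz‖ = 1 := inv_mul_cancel₀ hνzpos.ne'
  have hbxpos : 0 < bx := by rw [hbx_def]; positivity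
  have hbzpos : 0 < bz := by rw [hbz_def]; positivity
  have hbx_lo : s ≤ bx := by
    calc s = s * (‖νx‖ * bx) := by rw [hbx_def, mul_inv_cancel₀ hνxpos.ne', mul_one]
      _ = (s * ‖νx‖) * bx := by ring
      _ ≤ 1 * bx := mul_le_mul_of_nonneg_right hbndx.2 hbxpos.le
      _ = bx := one_mul bx
  have hbz_lo : s ≤ bz := by
    calc s = s * (‖νz‖ * bz) := by rw [hbz_def, mul_inv_cancel₀ hνzpos.ne', mul_one]
      _ = (s * ‖νz‖) * bz := by ring
      _ ≤ 1 * bz := mul_le_mul_of_nonneg_right hbndz.2 hbzpos.le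
      _ = bz := one_mul bz
  have hbx_hi : bx ≤ Real.sqrt 3 * s := by
    have h1 : 1 ≤ (Real.sqrt 3 * s) * ‖νx‖ := by
      have h2 := mul_le_mul_of_nonneg_right hsL (norm_nonneg νx)
      linarith only [hbndx.1, h2]
    calc bx = bx * 1 := (mul_one bx).symm
      _ ≤ bx * ((Real.sqrt 3 * s) * ‖νx‖) := mul_le_mul_of_nonneg_left h1 hbxpos.le
      _ = (bx * ‖νx‖) * (Real.sqrt 3 * s) := by ring
      _ = Real.sqrt 3 * s := by rw [hbxν, one_mul]
  have hbz_hi : bz ≤ Real.sqrt 3 * s := by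
    have h1 : 1 ≤ (Real.sqrt 3 * s) * ‖νz‖ := by
      have h2 := mul_le_mul_of_nonneg_right hsL (norm_nonneg νz)
      linarith only [hbndz.1, h2]
    calc bz = bz * 1 := (mul_one bz).symm
      _ ≤ bz * ((Real.sqrt 3 * s) * ‖νz‖) := mul_le_mul_of_nonneg_left h1 hbzpos.le
      _ = (bz * ‖νz‖) * (Real.sqrt 3 * s) := by ring
      _ = Real.sqrt 3 * s := by rw [hbzν, one_mul]
  clear_value bx bz
  set c := bx + bz with hc_def
  have hc_lo : 2 * s ≤ c := by rw [hc_def]; linarith only [hbx_lo, hbz_lo]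
  have hc_pos : 0 < c := by linarith only [hc_lo, hs]
  clear_value c
  -- geometry
  set u : EucSp n := bx • νx with hu_def
  set t : ℝ := -(3 * s) / (4 * c) with ht_def
  set y₀ : EucSp n := t • u with hy₀_def
  have hu_norm : ‖u‖ = 1 := by
    rw [hu_def, norm_smul, Real.norm_eq_abs, abs_of_pos hbxpos, hbxν]
  have ht_abs : |t| = 3 * s / (4 * c) := by
    rw [ht_def, abs_div, abs_of_pos (by linarith only [hc_pos] : (0:ℝ) < 4 * c), abs_neg,
      abs_of_pos (by linarith only [hs] : (0:ℝ) < 3 * s)]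
  have hεtc : ε * (t * bx) - ε * (t * (-bz)) = -(3/4) * X := by
    rw [ht_def, hX_def, hc_def]
    field_simp
    ring
  have hy₀_norm : ‖y₀‖ ≤ 3 / 8 := by
    rw [hy₀_def, norm_smul, hu_norm, mul_one, Real.norm_eq_abs, ht_abs,
      div_le_iff₀ (by linarith only [hc_pos] : (0:ℝ) < 4 * c)]
    linarith only [hc_lo, hs]
  clear_value u t y₀
  set ρ : ℝ := (Real.sqrt 3)⁻¹ * (1 / 300) with hρ_def
  have hρpos : 0 < ρ := by rw [hρ_def]; positivity
  have hρsmall : ρ ≤ 1 / 300 := by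
    have hinv : (Real.sqrt 3)⁻¹ ≤ 1 := inv_le_one_of_one_le₀ h3one
    have hinv0 : 0 ≤ (Real.sqrt 3)⁻¹ := by positivity
    rw [hρ_def]
    linarith only [hinv, hinv0]
  have hρ3 : 2 * Real.sqrt 3 * ρ = 1 / 150 := by
    rw [hρ_def]
    field_simp
    ring
  clear_value ρ
  -- the difference map
  set T : EucSp n → EucSp n :=
    fun y => (x + ε • mvE Mx y) - (z + ε • mvE (Mz * Q) y) with hT_def
  clear_value T
  have hxz' : x - z = d • e1 n := by
    rw [← hxz, smul_smul, mul_inv_cancel₀ hd.ne', one_smul]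
  have hQu : mvE Q u = (-bz) • νz := by
    rw [hQv, neg_smul]
  have hTy₀ : T y₀ = (d - (3/4) * X) • e1 n := by
    have h1 : mvE Mx y₀ = (t * bx) • e1 n := by
      rw [hy₀_def, mvE_smul, hu_def, mvE_smul, hMxνx, smul_smul]
    have h2 : mvE (Mz * Q) y₀ = (t * (-bz)) • e1 n := by
      rw [hy₀_def, mvE_mul, mvE_smul, hQu, mvE_smul, mvE_smul, hMzνz, smul_smul]
    rw [hT_def]
    simp only [h1, h2]
    rw [show (x + ε • (t * bx) • e1 n) - (z + ε • (t * (-bz)) • e1 n)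
        = (x - z) + ((ε * (t * bx) - ε * (t * (-bz))) • e1 n) by
      rw [smul_smul, smul_smul, sub_smul]; abel, hxz', hεtc, ← add_smul]
    rw [show d + -(3/4) * X = d - (3/4) * X from by ring]
  have hLip : ∀ y : EucSp n, ‖T y - T y₀‖ ≤ 2 * Real.sqrt 3 * s * ε * ‖y - y₀‖ := by
    intro y
    have hdiff : T y - T y₀ = ε • mvE Mx (y - y₀) - ε • mvE (Mz * Q) (y - y₀) := by
      rw [hT_def]
      simp only [mvE_sub]
      rw [smul_sub, smul_sub]
      abel
    rw [hdiff]
    have key : ∀ w : EucSp n, ‖mvE Mx w‖ ≤ Real.sqrt 3 * s * ‖w‖ := by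
      intro w
      have h1 := (norm_mvE_bounds hlam hLam0 hAx w).2
      rw [← hMx_def] at h1
      exact le_trans h1 (mul_le_mul_of_nonneg_right hsL (norm_nonneg w))
    have keyz : ∀ w : EucSp n, ‖mvE (Mz * Q) w‖ ≤ Real.sqrt 3 * s * ‖w‖ := by
      intro w
      rw [mvE_mul]
      have h1 := (norm_mvE_bounds hlam hLam0 hAz (mvE Q w)).2
      rw [← hMz_def, norm_mvE_orth hQ.2] at h1
      exact le_trans h1 (mul_le_mul_of_nonneg_right hsL (norm_nonneg w))
    have b1 : ‖ε • mvE Mx (y - y₀)‖ ≤ ε * (Real.sqrt 3 * s * ‖y - y₀‖) := by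
      rw [norm_smul, Real.norm_eq_abs, abs_of_pos hε]
      exact mul_le_mul_of_nonneg_left (key _) hε.le
    have b2 : ‖ε • mvE (Mz * Q) (y - y₀)‖ ≤ ε * (Real.sqrt 3 * s * ‖y - y₀‖) := by
      rw [norm_smul, Real.norm_eq_abs, abs_of_pos hε]
      exact mul_le_mul_of_nonneg_left (keyz _) hε.le
    calc ‖ε • mvE Mx (y - y₀) - ε • mvE (Mz * Q) (y - y₀)‖
        ≤ ‖ε • mvE Mx (y - y₀)‖ + ‖ε • mvE (Mz * Q) (y - y₀)‖ := norm_sub_le _ _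
      _ ≤ 2 * (ε * (Real.sqrt 3 * s * ‖y - y₀‖)) := by linarith
      _ = 2 * Real.sqrt 3 * s * ε * ‖y - y₀‖ := by ring
  -- key pointwise bound on the small ball
  have hkey : ∀ y ∈ Metric.ball y₀ ρ, 2 * ‖T y‖ ≤ ((i:ℝ) - 1) * X := by
    intro y hy
    have hyd : ‖y - y₀‖ ≤ ρ := by
      rw [← dist_eq_norm]; exact (Metric.mem_ball.1 hy).le
    have h4 : 2 * Real.sqrt 3 * s * ε * ‖y - y₀‖ ≤ X / 150 := by
      have hcoef : (0:ℝ) ≤ 2 * Real.sqrt 3 * s * ε := by positivity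
      calc 2 * Real.sqrt 3 * s * ε * ‖y - y₀‖
          ≤ 2 * Real.sqrt 3 * s * ε * ρ := mul_le_mul_of_nonneg_left hyd hcoef
        _ = (2 * Real.sqrt 3 * ρ) * (s * ε) := by ring
        _ = (1 / 150) * (s * ε) := by rw [hρ3]
        _ = X / 150 := by rw [hX_def]; ring
    have hTn : ‖T y‖ ≤ |d - (3/4) * X| + X / 150 := by
      have h1 : ‖T y‖ ≤ ‖T y₀‖ + ‖T y - T y₀‖ := by
        have h := norm_add_le (T y₀) (T y - T y₀)
        simpa using h
      have h2 : ‖T y₀‖ = |d - (3/4) * X| := by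
        rw [hTy₀, norm_smul, he1, mul_one, Real.norm_eq_abs]
      have h3' := hLip y
      linarith only [h1, h2, h3', h4]
    have h2X : 2 * X ≤ (i:ℝ) * X := mul_le_mul_of_nonneg_right hi2R hX.le
    have habs : |d - (3/4) * X| ≤ ((i:ℝ) - 1) / 2 * X - X / 150 - X / 300 := by
      rw [abs_le]
      constructor
      · linarith only [hile, hlo', h2X, hX]
      · linarith only [hile, hlo', h2X, hX]
    linarith only [hTn, habs, hX]
  -- lower bound for the integrand on the small ball
  set F : EucSp n → ℝ := fun y =>
    f2 α C lam ε N (x + ε • mvE Mx y) (z + ε • mvE (Mz * Q) y) with hF_def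
  have hFT : ∀ y, F y = (if ‖T y‖ / (s * ε) > (N : ℝ) then (0:ℝ)
      else C ^ (2 * (2 * N - ⌈2 * ‖T y‖ / (s * ε)⌉₊)) * ε ^ α) := by
    intro y
    have hTy : x + ε • mvE Mx y - (z + ε • mvE (Mz * Q) y) = T y := by rw [hT_def]
    simp only [hF_def, f2]
    rw [hTy, ← hs_def]
  clear_value F
  have hCpos : 0 < C := lt_of_lt_of_le one_pos hC
  have hF0 : ∀ y, 0 ≤ F y := by
    intro y
    rw [hFT]
    split
    · exact le_refl _
    · positivity
  set m : ℝ := C ^ 2 * f2 α C lam ε N x z with hm_def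
  have hm0 : 0 ≤ m := by rw [hm_def, hf2xz]; positivity
  have hFm : ∀ y ∈ Metric.ball y₀ ρ, m ≤ F y := by
    intro y hy
    have hk := hkey y hy
    have hr0 : (0:ℝ) ≤ ‖T y‖ := norm_nonneg _
    rw [hFT]
    have hiX : ((i:ℝ) - 1) * X ≤ (2 * (N:ℝ) - 1) * X :=
      mul_le_mul_of_nonneg_right (by linarith) hX.le
    have hcond : ¬ (‖T y‖ / (s * ε) > (N : ℝ)) := by
      rw [not_lt, div_le_iff₀ hsε, ← hX_def]
      linarith only [hk, hiX, hX]
    rw [if_neg hcond]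
    have hj : ⌈2 * ‖T y‖ / (s * ε)⌉₊ ≤ i - 1 := by
      apply Nat.ceil_le.2
      rw [div_le_iff₀ hsε, ← hX_def]
      have hcast : ((i - 1 : ℕ) : ℝ) = (i:ℝ) - 1 := by
        have h1 : 1 ≤ i := by omega
        push_cast [h1]
        ring
      rw [hcast]
      linarith only [hk]
    have hexp : 2 * (2 * N - i) + 2 ≤ 2 * (2 * N - ⌈2 * ‖T y‖ / (s * ε)⌉₊) := by omega
    have hpow : C ^ (2 * (2 * N - i) + 2) ≤ C ^ (2 * (2 * N - ⌈2 * ‖T y‖ / (s * ε)⌉₊)) :=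
      pow_le_pow_right₀ hC hexp
    rw [hm_def, hf2xz]
    calc C ^ 2 * (C ^ (2 * (2 * N - i)) * ε ^ α)
        = C ^ (2 * (2 * N - i) + 2) * ε ^ α := by rw [pow_add]; ring
      _ ≤ C ^ (2 * (2 * N - ⌈2 * ‖T y‖ / (s * ε)⌉₊)) * ε ^ α :=
          mul_le_mul_of_nonneg_right hpow hεα.le
  clear_value m
  -- measurability and integrability
  have hTcont : Continuous T := by
    rw [hT_def]
    exact (continuous_const.add ((mvE_continuous Mx).const_smul ε)).sub
      (continuous_const.add ((mvE_continuous (Mz * Q)).const_smul ε))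
  have hFmeas : Measurable F := by
    have hcomp : F = (fun k : ℕ => if 2 * N < k then (0:ℝ) else C ^ (2 * (2 * N - k)) * ε ^ α)
        ∘ (fun y => ⌈2 * ‖T y‖ / (s * ε)⌉₊) := by
      funext y
      rw [hFT y]
      simp only [Function.comp_apply]
      by_cases hb : (N : ℝ) < ‖T y‖ / (s * ε)
      · rw [if_pos hb, if_pos]
        apply Nat.lt_ceil.2
        rw [lt_div_iff₀ hsε] at hb ⊢
        push_cast
        linarith only [hb]
      · rw [if_neg hb, if_neg]
        rw [not_lt] at hb ⊢
        apply Nat.ceil_le.2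
        rw [div_le_iff₀ hsε] at hb ⊢
        push_cast
        linarith only [hb]
    rw [hcomp]
    exact measurable_from_top.comp
      (Nat.measurable_ceil.comp ((hTcont.norm.measurable.const_mul 2).div_const _))
  have hFbd : ∀ y : EucSp n, ‖F y‖ ≤ C ^ (4 * N) * ε ^ α := by
    intro y
    rw [Real.norm_eq_abs, abs_of_nonneg (hF0 y), hFT]
    split
    · positivity
    · exact mul_le_mul_of_nonneg_right (pow_le_pow_right₀ hC (by omega)) hεα.le
  set B := Metric.ball (0 : EucSp n) 1 with hB_def
  set S := Metric.ball y₀ ρ with hS_def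
  have hSB : S ⊆ B := by
    intro y hy
    rw [hS_def, Metric.mem_ball] at hy
    rw [hB_def, Metric.mem_ball, dist_zero_right]
    have h1 : ‖y‖ ≤ ‖y - y₀‖ + ‖y₀‖ := by simpa using norm_add_le (y - y₀) y₀
    rw [dist_eq_norm] at hy
    linarith only [hρsmall, hy₀_norm, h1, hy]
  have hBfin : volume B ≠ ⊤ := measure_ball_lt_top.ne
  have hFint : IntegrableOn F B := by
    apply Measure.integrableOn_of_bounded hBfin hFmeas.aestronglyMeasurable
    exact Filter.Eventually.of_forall hFbd
  -- measures
  have hμS : (volume S).toReal = ρ ^ n * (volume B).toReal := by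
    rw [hS_def, hB_def, Measure.addHaar_ball_of_pos volume y₀ hρpos,
      finrank_euclideanSpace_fin, ENNReal.toReal_mul, ENNReal.toReal_ofReal (by positivity)]
  have hKpos : 0 < (volume B).toReal :=
    ENNReal.toReal_pos (Metric.measure_ball_pos volume 0 one_pos).ne' hBfin
  -- put everything together
  have hint1 : m * (volume S).toReal ≤ ∫ y in S, F y := by
    have h1 : ∫ (_ : EucSp n) in S, m ≤ ∫ y in S, F y := by
      apply setIntegral_mono_on
      · exact integrableOn_const (lt_of_le_of_lt (measure_mono hSB) hBfin.lt_top).ne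
      · exact hFint.mono_set hSB
      · exact measurableSet_ball
      · intro y hy
        exact hFm y (by rwa [hS_def] at hy)
    rw [setIntegral_const, smul_eq_mul, mul_comm] at h1
    exact h1
  have hint2 : ∫ y in S, F y ≤ ∫ y in B, F y := by
    apply setIntegral_mono_set hFint
    · exact Filter.Eventually.of_forall fun y => hF0 y
    · exact HasSubset.Subset.eventuallyLE hSB
  have havg : (⨍ y in B, F y) = (volume B).toReal⁻¹ * ∫ y in B, F y := by
    rw [setAverage_eq, smul_eq_mul]; rfl
  have hfinal : ρ ^ n * m ≤ ⨍ y in B, F y := by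
    rw [havg]
    have h1 : ρ ^ n * m * (volume B).toReal ≤ ∫ y in B, F y := by
      calc ρ ^ n * m * (volume B).toReal = m * (ρ ^ n * (volume B).toReal) := by ring
        _ = m * (volume S).toReal := by rw [hμS]
        _ ≤ ∫ y in S, F y := hint1
        _ ≤ ∫ y in B, F y := hint2
    calc ρ ^ n * m = (volume B).toReal⁻¹ * (ρ ^ n * m * (volume B).toReal) := by
          field_simp
      _ ≤ (volume B).toReal⁻¹ * ∫ y in B, F y :=
          mul_le_mul_of_nonneg_left h1 (by positivity)
  have hgoal : (3 : ℝ) ^ (-(n : ℝ) / 2) * (1 / 300) ^ n * C ^ 2 * f2 α C lam ε N x z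
      = ρ ^ n * m := by
    rw [hm_def, hρ_def, gamma_eq_rho_pow]
    ring
  rw [ge_iff_le, hgoal]
  exact hfinal


end
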